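/- Define φ : [0,∞) × ℝ → ℝ by φ(t,x) = −(x − t/2 − t²)²/(1 + 4t), and ϱ(t) = t/2 + t². Then: (i) for every t > 0 and x ∈ ℝ, φ is differentiable with ∂t φ(t,x) = x − ϱ(t) + (∂x φ(t,x))²; (ii) for every t ≥ 0, max_{x∈ℝ} φ(t,x) = 0, and this maximum is attained exactly at the single point x = ϱ(t) = t/2 + t²; (iii) φ(0,x) = −x². -/

import Mathlib

/-- The explicit solution of the constrained Hamilton–Jacobi problem of Section 6.1. -/
noncomputable def phiEx (t x : ℝ) : ℝ := -(x - t / 2 - t ^ 2) ^ 2 / (1 + 4 * t)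

/-- The associated Lagrange multiplier / concentration point. -/
noncomputable def rhoEx (t : ℝ) : ℝ := t / 2 + t ^ 2

lemma hasDerivAt_x (t x : ℝ) :
    HasDerivAt (fun y => phiEx t y) (-2 * (x - t / 2 - t ^ 2) / (1 + 4 * t)) x := by
  have h : HasDerivAt (fun y : ℝ => -(y - t / 2 - t ^ 2) ^ 2) (-2 * (x - t / 2 - t ^ 2)) x := by
    have := (((hasDerivAt_id x).sub_const (t / 2)).sub_const (t ^ 2)).fun_pow 2
    have h2 := this.fun_neg
    convert h2 using 1
    any_goals rfl
    simp only [id_eq]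
    ring
  exact h.div_const _

lemma hasDerivAt_t (t x : ℝ) (ht : (1 : ℝ) + 4 * t ≠ 0) :
    HasDerivAt (fun s => phiEx s x)
      (((x - t / 2 - t ^ 2) * (1 + 4 * t) ^ 2 + 4 * (x - t / 2 - t ^ 2) ^ 2) /
        (1 + 4 * t) ^ 2) t := by
  have hv : HasDerivAt (fun s : ℝ => x - s / 2 - s ^ 2) (-(1 / 2) - 2 * t) t := by
    have h1 : HasDerivAt (fun s : ℝ => s / 2) ((1 : ℝ) / 2) t := by
      simpa using (hasDerivAt_id t).div_const 2
    have h2 : HasDerivAt (fun s : ℝ => s ^ 2) (2 * t) t := by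
      simpa using (hasDerivAt_id t).fun_pow 2
    have := ((h1.const_sub x).fun_sub h2)
    convert this using 1
  have hN : HasDerivAt (fun s : ℝ => -(x - s / 2 - s ^ 2) ^ 2)
      (-(2 * (x - t / 2 - t ^ 2) * (-(1 / 2) - 2 * t))) t := by
    have := (hv.fun_pow 2).fun_neg
    convert this using 1
    any_goals rfl
    ring
  have hD : HasDerivAt (fun s : ℝ => 1 + 4 * s) 4 t := by
    simpa using ((hasDerivAt_id t).const_mul 4).const_add 1
  have := hN.fun_div hD ht
  convert this using 1
  any_goals rfl
  field_simp
  ring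

/-- explicit solution of the constrained Hamilton–Jacobi problem of
Section 6.1 of the paper: `φ(t,x) = −(x − t/2 − t²)²/(1+4t)` solves
`∂t φ = x − ϱ(t) + (∂x φ)²` for `t > 0`, satisfies `max_x φ(t,·) = 0` attained exactly
at `x = ϱ(t) = t/2 + t²`, and `φ(0,x) = −x²`. -/
theorem explicit_constrained_solution :
    (∀ t > (0 : ℝ), ∀ x : ℝ,
      DifferentiableAt ℝ (fun s => phiEx s x) t ∧
      DifferentiableAt ℝ (fun y => phiEx t y) x ∧
      deriv (fun s => phiEx s x) t = x - rhoEx t + (deriv (fun y => phiEx t y) x) ^ 2) ∧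
    (∀ t ≥ (0 : ℝ),
      (∀ x : ℝ, phiEx t x ≤ 0) ∧ phiEx t (rhoEx t) = 0 ∧
      ∀ x : ℝ, phiEx t x = 0 → x = rhoEx t) ∧
    (∀ x : ℝ, phiEx 0 x = -x ^ 2) := by
  refine ⟨?_, ?_, ?_⟩
  · intro t ht x
    have hD : (1 : ℝ) + 4 * t ≠ 0 := by positivity
    have h1 := hasDerivAt_t t x hD
    have h2 := hasDerivAt_x t x
    refine ⟨h1.differentiableAt, h2.differentiableAt, ?_⟩
    rw [h1.deriv, h2.deriv, rhoEx]
    field_simp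
    ring
  · intro t ht
    have hD : (0 : ℝ) < 1 + 4 * t := by linarith
    refine ⟨fun x => ?_, ?_, fun x hx => ?_⟩
    · unfold phiEx
      apply div_nonpos_of_nonpos_of_nonneg
      · nlinarith [sq_nonneg (x - t / 2 - t ^ 2)]
      · linarith
    · unfold phiEx rhoEx
      ring_nf
    · unfold phiEx at hx
      rw [div_eq_zero_iff] at hx
      rcases hx with hx | hx
      · have : (x - t / 2 - t ^ 2) ^ 2 = 0 := by linarith
        have := pow_eq_zero_iff (n := 2) (by norm_num) |>.mp this
        unfold rhoEx; linarith
      · linarith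
  · intro x
    unfold phiEx
    norm_num
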